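/- Let H₀ ∈ SL(2,ℝ) be hyperbolic with eigenvalues e^{α}, e^{-α} (α > 0). Identify P(ℝ²) with T = ℝ/ℤ via ψ(ℝ(cos πθ, sin πθ)) = θ and let Ĥ denote the induced circle diffeomorphism of H ∈ SL(2,ℝ). Then for all H sufficiently close to H₀, H is hyperbolic, and there is a constant c > 0 such that for every δ ∈ (0, 1/2) and every n ≥ 1, Ĥ^n(T \ B(s(H), δ)) ⊆ B(u(H), c δ^{-1} e^{-nα}), where u(H), s(H) are the attracting and repelling fixed points of Ĥ on T. -/

import Mathlib

open scoped Real

instance : Fact ((0 : ℝ) < 1) := ⟨zero_lt_one⟩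

/-- The circle map `Ĥ` on `T = ℝ/ℤ ≅ P(ℝ²)` induced by `H ∈ SL(2,ℝ)`, via the
identification `ψ(ℝ(cos πθ, sin πθ)) = θ`: the class of `θ` is sent to the class of
`arg(H·(cos πθ, sin πθ))/π` (the vector viewed as a complex number). -/
noncomputable def projCircle (H : Matrix.SpecialLinearGroup (Fin 2) ℝ) :
    AddCircle (1 : ℝ) → AddCircle (1 : ℝ) := fun x =>
  let θ : ℝ := (AddCircle.equivIco 1 0 x : ℝ)
  let a : ℝ := (H : Matrix (Fin 2) (Fin 2) ℝ) 0 0 * Real.cos (π * θ)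
      + (H : Matrix (Fin 2) (Fin 2) ℝ) 0 1 * Real.sin (π * θ)
  let b : ℝ := (H : Matrix (Fin 2) (Fin 2) ℝ) 1 0 * Real.cos (π * θ)
      + (H : Matrix (Fin 2) (Fin 2) ℝ) 1 1 * Real.sin (π * θ)
  ((Complex.arg (Complex.mk a b) / π : ℝ) : AddCircle (1 : ℝ))

namespace Stmt8Aux

/-- cross product / determinant of two planar vectors (as complex numbers). -/
def cross (z w : ℂ) : ℝ := z.re * w.im - z.im * w.re

/-- action of a matrix on ℝ² viewed as ℂ -/
def act (M : Matrix (Fin 2) (Fin 2) ℝ) (z : ℂ) : ℂ :=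
  ⟨M 0 0 * z.re + M 0 1 * z.im, M 1 0 * z.re + M 1 1 * z.im⟩

noncomputable def projC (z : ℂ) : AddCircle (1 : ℝ) := ((z.arg / π : ℝ) : AddCircle (1 : ℝ))

noncomputable def theta (x : AddCircle (1 : ℝ)) : ℝ := (AddCircle.equivIco 1 0 x : ℝ)

noncomputable def vecC (x : AddCircle (1 : ℝ)) : ℂ :=
  ⟨Real.cos (π * theta x), Real.sin (π * theta x)⟩

lemma theta_mem (x : AddCircle (1 : ℝ)) : theta x ∈ Set.Ico (0:ℝ) 1 := by
  have := (AddCircle.equivIco 1 0 x).2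
  simpa [theta] using this

lemma coe_theta (x : AddCircle (1 : ℝ)) : ((theta x : ℝ) : AddCircle (1:ℝ)) = x :=
  (AddCircle.equivIco 1 0).symm_apply_apply x

lemma vecC_eq (x : AddCircle (1 : ℝ)) :
    vecC x = Complex.cos (π * theta x : ℝ) + Complex.sin (π * theta x : ℝ) * Complex.I := by
  rw [vecC, Complex.mk_eq_add_mul_I, Complex.ofReal_cos, Complex.ofReal_sin]

lemma abs_vecC (x : AddCircle (1 : ℝ)) : ‖(vecC x)‖ = 1 := by
  simp only [vecC, Complex.norm_def, Complex.normSq_mk]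
  have h : Real.cos (π * theta x) * Real.cos (π * theta x)
      + Real.sin (π * theta x) * Real.sin (π * theta x) = 1 := by
    nlinarith [Real.sin_sq_add_cos_sq (π * theta x)]
  rw [h, Real.sqrt_one]

lemma vecC_ne_zero (x : AddCircle (1 : ℝ)) : vecC x ≠ 0 := by
  intro h
  have := abs_vecC x
  rw [h] at this; simp at this

lemma projC_vecC (x : AddCircle (1 : ℝ)) : projC (vecC x) = x := by
  have h := theta_mem x
  have harg : (vecC x).arg = π * theta x := by
    rw [vecC_eq, Complex.arg_cos_add_sin_mul_I]
    constructor
    · nlinarith [Real.pi_pos, h.1, h.2]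
    · nlinarith [Real.pi_pos, h.1, h.2]
  rw [projC, harg, mul_comm, mul_div_assoc, div_self Real.pi_ne_zero, mul_one]
  exact coe_theta x

lemma projCircle_eq (H : Matrix.SpecialLinearGroup (Fin 2) ℝ) (x : AddCircle (1:ℝ)) :
    projCircle H x = projC (act (H : Matrix (Fin 2) (Fin 2) ℝ) (vecC x)) := rfl

/-- two reals with integer difference give the same point of the circle -/
lemma coe_eq_coe_of_int (a b : ℝ) (k : ℤ) (h : a - b = k) :
    ((a : ℝ) : AddCircle (1:ℝ)) = (b : ℝ) := by
  have : ((a - b : ℝ) : AddCircle (1:ℝ)) = 0 := by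
    rw [AddCircle.coe_eq_zero_iff]
    exact ⟨k, by simp [h]⟩
  have := congrArg (· + ((b : ℝ) : AddCircle (1:ℝ))) this
  simpa [sub_add_cancel] using this

lemma projC_real_mul {l : ℝ} (hl : l ≠ 0) {z : ℂ} (hz : z ≠ 0) :
    projC ((l : ℂ) * z) = projC z := by
  rcases lt_or_gt_of_ne hl with h | h
  · have h1 : (l : ℂ) * z = ((-l : ℝ) : ℂ) * (-z) := by push_cast; ring
    rw [projC, h1, Complex.arg_real_mul _ (by linarith : (0:ℝ) < -l)]
    have h2 : ((Complex.arg (-z) : ℝ) : Real.Angle) = ((z.arg + π : ℝ) : Real.Angle) := by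
      simpa using Complex.arg_neg_coe_angle hz
    rw [Real.Angle.angle_eq_iff_two_pi_dvd_sub] at h2
    obtain ⟨k, hk⟩ := h2
    refine coe_eq_coe_of_int _ _ (2 * k + 1) ?_
    have hπ := Real.pi_ne_zero
    field_simp
    push_cast
    linarith [hk]
  · rw [projC, Complex.arg_real_mul _ h]; rfl

/-- representation: `vecC (projC z)` is a nonzero real multiple of `z`. -/
lemma exists_real_mul (z : ℂ) (hz : z ≠ 0) :
    ∃ l : ℝ, l ≠ 0 ∧ vecC (projC z) = (l : ℂ) * z := by
  set x := projC z with hx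
  have h1 : ((theta x : ℝ) : AddCircle (1:ℝ)) = ((z.arg / π : ℝ) : AddCircle (1:ℝ)) := by
    rw [coe_theta]; rfl
  have h2 : ((theta x - z.arg / π : ℝ) : AddCircle (1:ℝ)) = 0 := by
    push_cast
    rw [AddCircle.coe_sub, h1, sub_self]
  rw [AddCircle.coe_eq_zero_iff] at h2
  obtain ⟨k, hk⟩ := h2
  have hπ := Real.pi_ne_zero
  have harg : z.arg = π * theta x - π * k := by
    have : theta x - z.arg / π = k := by simpa using hk.symm
    field_simp at this ⊢
    linarith
  have hz' : z = (‖z‖ : ℂ) * Complex.exp (z.arg * Complex.I) :=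
    (Complex.norm_mul_exp_arg_mul_I z).symm
  have hvec : vecC x = Complex.exp ((π * theta x : ℝ) * Complex.I) := by
    rw [vecC_eq, Complex.exp_mul_I]
  have hexp : Complex.exp ((z.arg : ℝ) * Complex.I)
      = ((-1 : ℝ) ^ k : ℝ) * Complex.exp ((π * theta x : ℝ) * Complex.I) := by
    rw [harg]
    push_cast
    rw [sub_mul, Complex.exp_sub]
    have h3 : Complex.exp ((π : ℂ) * k * Complex.I) = ((-1 : ℂ)) ^ k := by
      rw [show (π : ℂ) * k * Complex.I = k * (π * Complex.I) by ring,
        Complex.exp_int_mul, Complex.exp_pi_mul_I]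
    rw [h3]
    have hsq : ((-1:ℂ))^k * ((-1:ℂ))^k = 1 := by
      rw [← zpow_add₀ (by norm_num : (-1:ℂ) ≠ 0), show k + k = 2*k by ring, zpow_mul]
      norm_num
    rw [div_eq_mul_inv, inv_eq_of_mul_eq_one_right hsq]
    push_cast
    ring
  set m : ℝ := ‖z‖ * (-1) ^ k with hm
  have hmne : m ≠ 0 := by
    have h1 : ((-1 : ℝ) ^ k) ≠ 0 := zpow_ne_zero k (by norm_num)
    have h2 : ‖z‖ ≠ 0 := by simpa using hz
    exact mul_ne_zero h2 h1
  have hmne' : (m : ℂ) ≠ 0 := by exact_mod_cast hmne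
  have hzz : z = (m : ℂ) * vecC x := by
    conv_lhs => rw [hz']
    rw [hexp, hvec, hm]
    push_cast
    ring
  refine ⟨m⁻¹, inv_ne_zero hmne, ?_⟩
  rw [hzz]
  push_cast
  rw [← mul_assoc, inv_mul_cancel₀ hmne', one_mul]

lemma act_add (M : Matrix (Fin 2) (Fin 2) ℝ) (z w : ℂ) :
    act M (z + w) = act M z + act M w := by
  apply Complex.ext <;> simp [act] <;> ring

lemma act_real_mul (M : Matrix (Fin 2) (Fin 2) ℝ) (l : ℝ) (z : ℂ) :
    act M ((l : ℂ) * z) = (l : ℂ) * act M z := by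
  apply Complex.ext <;>
    simp [act, Complex.mul_re, Complex.mul_im, Complex.ofReal_re, Complex.ofReal_im] <;> ring

lemma act_mul (M N : Matrix (Fin 2) (Fin 2) ℝ) (z : ℂ) :
    act (M * N) z = act M (act N z) := by
  apply Complex.ext <;>
    simp [act, Matrix.mul_apply, Fin.sum_univ_two] <;> ring

lemma act_one (z : ℂ) : act (1 : Matrix (Fin 2) (Fin 2) ℝ) z = z := by
  apply Complex.ext <;> simp [act, Matrix.one_apply]

lemma act_zero (M : Matrix (Fin 2) (Fin 2) ℝ) : act M 0 = 0 := by
  apply Complex.ext <;> simp [act]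

lemma act_ne_zero (H : Matrix.SpecialLinearGroup (Fin 2) ℝ) {z : ℂ} (hz : z ≠ 0) :
    act (H : Matrix (Fin 2) (Fin 2) ℝ) z ≠ 0 := by
  intro h
  apply hz
  have := congrArg (act ((H⁻¹ : Matrix.SpecialLinearGroup (Fin 2) ℝ) : Matrix (Fin 2) (Fin 2) ℝ)) h
  rw [← act_mul, act_zero] at this
  rw [← Matrix.SpecialLinearGroup.coe_mul, inv_mul_cancel,
    Matrix.SpecialLinearGroup.coe_one, act_one] at this
  exact this

lemma equivariance (H : Matrix.SpecialLinearGroup (Fin 2) ℝ) {z : ℂ} (hz : z ≠ 0) :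
    projCircle H (projC z) = projC (act (H : Matrix (Fin 2) (Fin 2) ℝ) z) := by
  rw [projCircle_eq]
  obtain ⟨l, hl, hv⟩ := exists_real_mul z hz
  rw [hv, act_real_mul, projC_real_mul hl (act_ne_zero H hz)]

lemma iterate_eq (H : Matrix.SpecialLinearGroup (Fin 2) ℝ) (x : AddCircle (1:ℝ)) (n : ℕ) :
    (projCircle H)^[n] x = projC (act ((H ^ n : Matrix.SpecialLinearGroup (Fin 2) ℝ) :
      Matrix (Fin 2) (Fin 2) ℝ) (vecC x)) := by
  induction n with
  | zero => simp [Matrix.SpecialLinearGroup.coe_one, act_one, projC_vecC]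
  | succ n ih =>
      rw [Function.iterate_succ_apply', ih, pow_succ',
        Matrix.SpecialLinearGroup.coe_mul, act_mul]
      exact equivariance H (act_ne_zero (H ^ n) (vecC_ne_zero x))

lemma act_pow_eigen (H : Matrix.SpecialLinearGroup (Fin 2) ℝ) {μ : ℝ} {z : ℂ}
    (hz : act (H : Matrix (Fin 2) (Fin 2) ℝ) z = (μ : ℂ) * z) (n : ℕ) :
    act ((H ^ n : Matrix.SpecialLinearGroup (Fin 2) ℝ) : Matrix (Fin 2) (Fin 2) ℝ) z
      = ((μ ^ n : ℝ) : ℂ) * z := by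
  induction n with
  | zero => simp [Matrix.SpecialLinearGroup.coe_one, act_one]
  | succ n ih =>
      rw [pow_succ', Matrix.SpecialLinearGroup.coe_mul, act_mul, ih, act_real_mul, hz]
      push_cast
      ring

lemma abs_cross_le (z w : ℂ) : |cross z w| ≤ ‖z‖ * ‖w‖ := by
  have h : cross z w = ((starRingEnd ℂ) z * w).im := by
    simp [cross, Complex.mul_im]
    ring
  rw [h]
  calc |((starRingEnd ℂ) z * w).im| ≤ ‖((starRingEnd ℂ) z * w)‖ :=
        Complex.abs_im_le_norm _
    _ = ‖z‖ * ‖w‖ := by rw [norm_mul, Complex.norm_conj]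

lemma cross_real_mul_left (l : ℝ) (z w : ℂ) : cross ((l:ℂ) * z) w = l * cross z w := by
  simp [cross, Complex.mul_re, Complex.mul_im]
  ring

lemma cross_real_mul_right (l : ℝ) (z w : ℂ) : cross z ((l:ℂ) * w) = l * cross z w := by
  simp [cross, Complex.mul_re, Complex.mul_im]
  ring

lemma cross_self (z : ℂ) : cross z z = 0 := by simp [cross]; ring

lemma cross_add_left (z w v : ℂ) : cross (z + w) v = cross z v + cross w v := by
  simp [cross]; ring

lemma cross_antisymm (z w : ℂ) : cross z w = -cross w z := by
  simp [cross]; ring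

lemma cramer (u s v : ℂ) :
    ((cross u s : ℝ) : ℂ) * v = ((cross v s : ℝ) : ℂ) * u + ((cross u v : ℝ) : ℂ) * s := by
  apply Complex.ext <;>
    simp [cross, Complex.mul_re, Complex.mul_im, Complex.add_re, Complex.add_im] <;> ring

lemma exists_parallel {z w : ℂ} (hz : z ≠ 0) (h : cross z w = 0) :
    ∃ l : ℝ, w = (l : ℂ) * z := by
  rcases Complex.ext_iff.not.mp hz with -
  by_cases hre : z.re ≠ 0
  · refine ⟨w.re / z.re, ?_⟩
    apply Complex.ext
    · simp [Complex.mul_re, Complex.ofReal_re, Complex.ofReal_im]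
      field_simp
    · simp [Complex.mul_im, Complex.ofReal_re, Complex.ofReal_im]
      rw [cross] at h
      field_simp
      nlinarith [h]
  · push_neg at hre
    have him : z.im ≠ 0 := by
      intro h'
      exact hz (Complex.ext hre h')
    refine ⟨w.im / z.im, ?_⟩
    apply Complex.ext
    · simp [Complex.mul_re, Complex.ofReal_re, Complex.ofReal_im]
      rw [cross] at h
      field_simp
      nlinarith [h]
    · simp [Complex.mul_im, Complex.ofReal_re, Complex.ofReal_im]
      field_simp

lemma abs_of_vecC_eq {x : AddCircle (1:ℝ)} {l : ℝ} {z : ℂ} (h : vecC x = (l:ℂ) * z) :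
    |l| * ‖z‖ = 1 := by
  have := abs_vecC x
  rw [h, norm_mul, Complex.norm_real, Real.norm_eq_abs] at this
  exact this

/-- The key distance bound: twice the circle distance is at most the absolute
value of the cross product of the unit representatives. -/
lemma two_mul_dist_le (x y : AddCircle (1:ℝ)) :
    2 * dist x y ≤ |cross (vecC x) (vecC y)| := by
  set a := theta x
  set b := theta y
  have hxy : x - y = ((a - b : ℝ) : AddCircle (1:ℝ)) := by
    rw [AddCircle.coe_sub, coe_theta, coe_theta]
  have hdist : dist x y = |a - b - round (a - b)| := by
    rw [dist_eq_norm, hxy, AddCircle.norm_eq]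
    norm_num
  set r : ℤ := round (a - b) with hr
  set Δ : ℝ := a - b - r with hΔdef
  have hΔ : |Δ| ≤ 1/2 := abs_sub_round (a - b)
  have hcross : cross (vecC x) (vecC y) = Real.sin (π * b - π * a) := by
    simp only [cross, vecC]
    rw [Real.sin_sub]
    ring
  have hsin : |Real.sin (π * b - π * a)| = |Real.sin (π * Δ)| := by
    have : π * b - π * a = -(π * Δ) + (-r : ℤ) * π := by
      push_cast
      rw [hΔdef]
      ring
    rw [this, Real.sin_add_int_mul_pi, abs_mul, Real.sin_neg, abs_neg]
    have h5 : |((-1 : ℝ) ^ (-r : ℤ))| = 1 := by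
      rcases Int.even_or_odd (-r) with he | ho
      · rw [he.neg_one_zpow]; norm_num
      · rw [ho.neg_one_zpow]; norm_num
    rw [h5, one_mul]
  have hkey : 2 * |Δ| ≤ |Real.sin (π * Δ)| := by
    have hπ := Real.pi_pos
    have h1 : (0:ℝ) ≤ π * |Δ| := by positivity
    have h2 : π * |Δ| ≤ π / 2 := by nlinarith
    have h3 := Real.mul_le_sin h1 h2
    have h4 : 2 / π * (π * |Δ|) = 2 * |Δ| := by field_simp
    rw [h4] at h3
    rcases le_or_gt 0 Δ with hs | hs
    · rw [abs_of_nonneg hs] at h3 ⊢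
      exact h3.trans (le_abs_self _)
    · rw [abs_of_neg hs] at h3 ⊢
      calc 2 * -Δ ≤ Real.sin (π * -Δ) := h3
        _ = -Real.sin (π * Δ) := by rw [show π * -Δ = -(π * Δ) by ring, Real.sin_neg]
        _ ≤ |Real.sin (π * Δ)| := neg_le_abs _
  rw [hdist, hcross, hsin]
  exact_mod_cast hkey

/-- existence of an eigenvector for a root of the characteristic polynomial -/
lemma exists_eigenvector (H : Matrix.SpecialLinearGroup (Fin 2) ℝ) (μ : ℝ)
    (hchar : μ ^ 2 - Matrix.trace (H : Matrix (Fin 2) (Fin 2) ℝ) * μ + 1 = 0) :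
    ∃ z : ℂ, z ≠ 0 ∧ act (H : Matrix (Fin 2) (Fin 2) ℝ) z = (μ : ℂ) * z := by
  set M : Matrix (Fin 2) (Fin 2) ℝ := (H : Matrix (Fin 2) (Fin 2) ℝ) - μ • 1 with hM
  have hdetH : (H : Matrix (Fin 2) (Fin 2) ℝ) 0 0 * (H : Matrix (Fin 2) (Fin 2) ℝ) 1 1
      - (H : Matrix (Fin 2) (Fin 2) ℝ) 0 1 * (H : Matrix (Fin 2) (Fin 2) ℝ) 1 0 = 1 := by
    have := H.prop
    rwa [Matrix.det_fin_two] at this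
  have htr : Matrix.trace (H : Matrix (Fin 2) (Fin 2) ℝ)
      = (H : Matrix (Fin 2) (Fin 2) ℝ) 0 0 + (H : Matrix (Fin 2) (Fin 2) ℝ) 1 1 :=
    Matrix.trace_fin_two _
  have hdet : M.det = 0 := by
    rw [Matrix.det_fin_two]
    simp only [hM, Matrix.sub_apply, Matrix.smul_apply, Matrix.one_apply, smul_eq_mul]
    rw [htr] at hchar
    norm_num
    nlinarith [hchar, hdetH]
  obtain ⟨v, hv0, hvM⟩ := (Matrix.exists_mulVec_eq_zero_iff).mpr hdet
  refine ⟨⟨v 0, v 1⟩, ?_, ?_⟩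
  · intro h
    apply hv0
    funext i
    fin_cases i
    · exact congrArg Complex.re h
    · exact congrArg Complex.im h
  · have h0 := congrFun hvM 0
    have h1 := congrFun hvM 1
    simp only [hM, Matrix.mulVec, dotProduct, Fin.sum_univ_two, Matrix.sub_apply,
      Matrix.smul_apply, Matrix.one_apply, smul_eq_mul, Pi.zero_apply] at h0 h1
    norm_num at h0 h1
    apply Complex.ext
    · simp only [act, Complex.mul_re, Complex.ofReal_re, Complex.ofReal_im]
      norm_num
      linarith [h0]
    · simp only [act, Complex.mul_im, Complex.ofReal_re, Complex.ofReal_im]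
      norm_num
      linarith [h1]


lemma sq_ge_of_two_lt {t : ℝ} (h : 2 < t) : 0 ≤ t ^ 2 - 4 := by nlinarith

lemma sq_mono_of_lt {m t : ℝ} (h2 : 2 < m) (h : m < t) : m ^ 2 ≤ t ^ 2 := by nlinarith

lemma mul_self_mono {a b : ℝ} (ha : 0 < a) (h : a ≤ b) : a * a ≤ b * b := by nlinarith

lemma no_sq_one {x : ℝ} (h : x * x - 1 = 0) (h1 : 1 < x) : False := by nlinarith

lemma step3aux {d aw q q' δ : ℝ} (h1 : 2 * d * aw ≤ q') (h0 : 0 ≤ d * (aw - 2 * δ * q)) :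
    4 * δ * d * q ≤ q' := by nlinarith


end Stmt8Aux

set_option maxHeartbeats 2000000 in
theorem stmt8 (H₀ : Matrix.SpecialLinearGroup (Fin 2) ℝ) (α : ℝ) (hα : 0 < α)
    (htr : Matrix.trace (H₀ : Matrix (Fin 2) (Fin 2) ℝ) = Real.exp α + Real.exp (-α)) :
    ∃ ε > (0 : ℝ), ∀ H : Matrix.SpecialLinearGroup (Fin 2) ℝ,
      (∀ i j, |(H : Matrix (Fin 2) (Fin 2) ℝ) i j - (H₀ : Matrix (Fin 2) (Fin 2) ℝ) i j| < ε) →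
      |Matrix.trace (H : Matrix (Fin 2) (Fin 2) ℝ)| > 2 ∧
      ∃ u s : AddCircle (1 : ℝ), projCircle H u = u ∧ projCircle H s = s ∧ u ≠ s ∧
        ∃ c > (0 : ℝ), ∀ δ : ℝ, 0 < δ → δ < 1 / 2 → ∀ n : ℕ, 1 ≤ n →
          ∀ x : AddCircle (1 : ℝ), x ∉ Metric.ball s δ →
            (projCircle H)^[n] x ∈ Metric.ball u (c * δ⁻¹ * Real.exp (-(n : ℝ) * α)) := by
  classical
  set g : ℝ := Real.exp (α / 2) with hgdef
  clear_value g
  have hg1 : 1 < g := by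
    rw [hgdef, show (1:ℝ) = Real.exp 0 by simp]
    exact Real.exp_lt_exp.mpr (by linarith)
  have hg0 : 0 < g := by linarith
  have hi0 : 0 < g⁻¹ := by positivity
  have hginv : g * g⁻¹ = 1 := mul_inv_cancel₀ (by linarith)
  have hgg : g * g = Real.exp α := by
    rw [hgdef, ← Real.exp_add]; norm_num
  set T₀ : ℝ := Real.exp α + Real.exp (-α) with hT₀
  clear_value T₀
  set m : ℝ := g + g⁻¹ with hm
  clear_value m
  have hTm : T₀ = g * g + (g * g)⁻¹ := by
    rw [hT₀, hgg, Real.exp_neg]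
  have hi1 : g⁻¹ < 1 := inv_lt_one_of_one_lt₀ hg1
  have hmT : m < T₀ := by
    rw [hTm, hm, mul_inv]
    have hfact : 0 < (g - 1) * (g - g⁻¹ * g⁻¹) := by
      apply mul_pos (by linarith)
      nlinarith [hi1, hi0]
    have hexp : (g - 1) * (g - g⁻¹ * g⁻¹) = g * g + g⁻¹ * g⁻¹ - g - g⁻¹ := by
      linear_combination (-(g⁻¹)) * hginv
    linarith [hfact, hexp]
  have hm2 : 2 < m := by
    rw [hm]
    have h1 : 0 < (g - 1) ^ 2 * g⁻¹ := mul_pos (pow_pos (by linarith) 2) hi0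
    have h2 : (g - 1) ^ 2 * g⁻¹ = g + g⁻¹ - 2 := by
      linear_combination (g - 2) * hginv
    linarith [h1, h2]
  refine ⟨(T₀ - m) / 4, by linarith, fun H hH => ?_⟩
  set t : ℝ := Matrix.trace (H : Matrix (Fin 2) (Fin 2) ℝ) with htdef
  have htt : t = (H : Matrix (Fin 2) (Fin 2) ℝ) 0 0 + (H : Matrix (Fin 2) (Fin 2) ℝ) 1 1 := by
    rw [htdef]; exact Matrix.trace_fin_two _
  clear_value t
  have htr0 : (H₀ : Matrix (Fin 2) (Fin 2) ℝ) 0 0 + (H₀ : Matrix (Fin 2) (Fin 2) ℝ) 1 1 = T₀ := by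
    rw [← Matrix.trace_fin_two]; rw [hT₀] at htr ⊢; exact htr
  have ht : m < t := by
    have h00 := (abs_lt.mp (hH 0 0)).1
    have h11 := (abs_lt.mp (hH 1 1)).1
    rw [htt]
    linarith
  have ht2 : 2 < t := lt_trans hm2 ht
  refine ⟨by rw [abs_of_pos (by linarith)]; exact ht2, ?_⟩
  -- eigenvalues
  set st : ℝ := Real.sqrt (t ^ 2 - 4) with hstdef
  have hst2 : st ^ 2 = t ^ 2 - 4 := by
    rw [hstdef]; exact Real.sq_sqrt (Stmt8Aux.sq_ge_of_two_lt ht2)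
  have hstnn : 0 ≤ st := by rw [hstdef]; exact Real.sqrt_nonneg _
  clear_value st
  set μ : ℝ := (t + st) / 2 with hμdef
  clear_value μ
  have hμchar : μ ^ 2 - t * μ + 1 = 0 := by
    rw [hμdef]; linear_combination hst2 / 4
  have hμ1 : 1 < μ := by rw [hμdef]; linarith
  have hμ0 : 0 < μ := by linarith
  have hμg : g ≤ μ := by
    have hgninv : 0 ≤ g - g⁻¹ := by linarith [hi1, hg1]
    have hmsq : m ^ 2 - 4 = (g - g⁻¹) ^ 2 := by
      rw [hm]; linear_combination (4:ℝ) * hginv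
    have hmt2 : m ^ 2 ≤ t ^ 2 := Stmt8Aux.sq_mono_of_lt hm2 ht
    have h1 : (g - g⁻¹) ^ 2 ≤ t ^ 2 - 4 := by linarith [hmsq, hmt2]
    have h2 : g - g⁻¹ ≤ st := by
      have := Real.sqrt_le_sqrt h1
      rwa [Real.sqrt_sq hgninv, ← hstdef] at this
    rw [hμdef]
    rw [hm] at ht
    linarith [h2, ht]
  have hμ'char : (μ⁻¹) ^ 2 - t * μ⁻¹ + 1 = 0 := by
    have hμne : μ ≠ 0 := ne_of_gt hμ0
    linear_combination (μ⁻¹) ^ 2 * hμchar + (t * μ⁻¹ - μ * μ⁻¹ - 1) * mul_inv_cancel₀ hμne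
  obtain ⟨zu, hzu0, hzu⟩ := Stmt8Aux.exists_eigenvector H μ (by rw [← htdef]; exact hμchar)
  obtain ⟨zs, hzs0, hzs⟩ := Stmt8Aux.exists_eigenvector H μ⁻¹ (by rw [← htdef]; exact hμ'char)
  set D : ℝ := Stmt8Aux.cross zu zs with hDdef
  clear_value D
  have hμinv : μ * μ⁻¹ = 1 := mul_inv_cancel₀ (ne_of_gt hμ0)
  have hD : D ≠ 0 := by
    intro h
    rw [hDdef] at h
    obtain ⟨l, hl⟩ := Stmt8Aux.exists_parallel hzu0 h
    have hl0 : l ≠ 0 := by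
      intro h'; rw [h'] at hl; simp at hl; exact hzs0 hl
    have h1 : Stmt8Aux.act (H : Matrix (Fin 2) (Fin 2) ℝ) zs
        = ((μ⁻¹ : ℝ) : ℂ) * ((l : ℂ) * zu) := by rw [← hl]; exact hzs
    have h2 : Stmt8Aux.act (H : Matrix (Fin 2) (Fin 2) ℝ) zs
        = (l : ℂ) * (((μ : ℝ) : ℂ) * zu) := by
      rw [hl, Stmt8Aux.act_real_mul, hzu]
    have h3 : ((μ⁻¹ * l - l * μ : ℝ) : ℂ) * zu = 0 := by
      rw [h1] at h2
      push_cast at h2 ⊢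
      linear_combination h2
    rcases mul_eq_zero.mp h3 with h4 | h4
    · have h5 : μ⁻¹ * l - l * μ = 0 := by exact_mod_cast h4
      have hl2 : l * (μ * μ - 1) = 0 := by
        linear_combination (-μ) * h5 + l * hμinv
      rcases mul_eq_zero.mp hl2 with h6 | h6
      · exact hl0 h6
      · exact Stmt8Aux.no_sq_one h6 hμ1

    · exact hzu0 h4
  obtain ⟨lu, hlu, hvu⟩ := Stmt8Aux.exists_real_mul zu hzu0
  obtain ⟨ls, hls, hvs⟩ := Stmt8Aux.exists_real_mul zs hzs0
  have hlu_abs : |lu| * ‖zu‖ = 1 := Stmt8Aux.abs_of_vecC_eq hvu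
  have hls_abs : |ls| * ‖zs‖ = 1 := Stmt8Aux.abs_of_vecC_eq hvs
  have au_pos : 0 < ‖zu‖ := norm_pos_iff.mpr hzu0
  have as_pos : 0 < ‖zs‖ := norm_pos_iff.mpr hzs0
  set u : AddCircle (1:ℝ) := Stmt8Aux.projC zu with hu
  set s : AddCircle (1:ℝ) := Stmt8Aux.projC zs with hs
  clear_value u s
  refine ⟨u, s, ?_, ?_, ?_, 1, one_pos, ?_⟩
  · rw [hu, Stmt8Aux.equivariance H hzu0, hzu,
      Stmt8Aux.projC_real_mul (ne_of_gt hμ0) hzu0]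
  · rw [hs, Stmt8Aux.equivariance H hzs0, hzs,
      Stmt8Aux.projC_real_mul (inv_ne_zero (ne_of_gt hμ0)) hzs0]
  · intro h
    have hveq : Stmt8Aux.vecC u = Stmt8Aux.vecC s := by rw [h]
    have hcc : Stmt8Aux.cross (Stmt8Aux.vecC u) (Stmt8Aux.vecC s) = 0 := by
      rw [hveq]; exact Stmt8Aux.cross_self _
    rw [hvu, hvs, Stmt8Aux.cross_real_mul_left, Stmt8Aux.cross_real_mul_right,
      ← hDdef] at hcc
    rcases mul_eq_zero.mp hcc with h' | h'
    · exact hlu h'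
    · rcases mul_eq_zero.mp h' with h'' | h''
      · exact hls h''
      · exact hD h''
  · intro δ hδ hδ2 n hn x hx
    have hdxs : δ ≤ dist x s := le_of_not_gt (fun h => hx (Metric.mem_ball.mpr h))
    set v : ℂ := Stmt8Aux.vecC x with hv
    clear_value v
    have hv0 : v ≠ 0 := by rw [hv]; exact Stmt8Aux.vecC_ne_zero x
    set A : ℝ := Stmt8Aux.cross v zs with hAdef
    set B : ℝ := Stmt8Aux.cross zu v with hBdef
    clear_value A B
    have habsA : 2 * δ * ‖zs‖ ≤ |A| := by
      have h2d := Stmt8Aux.two_mul_dist_le x s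
      rw [← hv, hvs, Stmt8Aux.cross_real_mul_right, ← hAdef, abs_mul] at h2d
      have e1 : 2 * dist x s * ‖zs‖ ≤ |ls| * |A| * ‖zs‖ :=
        mul_le_mul_of_nonneg_right h2d as_pos.le
      have e2 : |ls| * |A| * ‖zs‖ = |A| := by
        linear_combination |A| * hls_abs
      have e3 : 2 * δ * ‖zs‖ ≤ 2 * dist x s * ‖zs‖ :=
        mul_le_mul_of_nonneg_right (by linarith [hdxs]) as_pos.le
      linarith [e1, e2, e3]
    have habsB : |B| ≤ ‖zu‖ := by
      have h1 := Stmt8Aux.abs_cross_le zu v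
      rw [← hBdef, hv, Stmt8Aux.abs_vecC x, mul_one] at h1
      exact h1
    set w : ℂ := Stmt8Aux.act ((H ^ n : Matrix.SpecialLinearGroup (Fin 2) ℝ) :
      Matrix (Fin 2) (Fin 2) ℝ) v with hwdef
    clear_value w
    have hw0 : w ≠ 0 := by rw [hwdef]; exact Stmt8Aux.act_ne_zero (H ^ n) hv0
    have hit : (projCircle H)^[n] x = Stmt8Aux.projC w := by
      rw [hwdef, hv]; exact Stmt8Aux.iterate_eq H x n
    have hdec : ((D : ℝ) : ℂ) * v = ((A : ℝ) : ℂ) * zu + ((B : ℝ) : ℂ) * zs := by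
      rw [hDdef, hAdef, hBdef]; exact Stmt8Aux.cramer zu zs v
    have hw : ((D : ℝ) : ℂ) * w
        = ((A * μ ^ n : ℝ) : ℂ) * zu + ((B * μ⁻¹ ^ n : ℝ) : ℂ) * zs := by
      have hcong := congrArg (Stmt8Aux.act ((H ^ n : Matrix.SpecialLinearGroup (Fin 2) ℝ) :
        Matrix (Fin 2) (Fin 2) ℝ)) hdec
      rw [Stmt8Aux.act_real_mul, Stmt8Aux.act_add, Stmt8Aux.act_real_mul,
        Stmt8Aux.act_real_mul, Stmt8Aux.act_pow_eigen H hzu n,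
        Stmt8Aux.act_pow_eigen H hzs n, ← hwdef] at hcong
      push_cast at hcong ⊢
      linear_combination hcong
    have hcwu : Stmt8Aux.cross w zu = -(B * μ⁻¹ ^ n) := by
      have h1 := congrArg (fun z => Stmt8Aux.cross z zu) hw
      simp only [Stmt8Aux.cross_real_mul_left, Stmt8Aux.cross_add_left] at h1
      rw [Stmt8Aux.cross_self, Stmt8Aux.cross_antisymm zs zu, ← hDdef] at h1
      have h2 : D * Stmt8Aux.cross w zu = D * (-(B * μ⁻¹ ^ n)) := by
        rw [h1]; ring
      exact mul_left_cancel₀ hD h2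
    have hcws : Stmt8Aux.cross w zs = A * μ ^ n := by
      have h1 := congrArg (fun z => Stmt8Aux.cross z zs) hw
      simp only [Stmt8Aux.cross_real_mul_left, Stmt8Aux.cross_add_left] at h1
      rw [Stmt8Aux.cross_self, ← hDdef] at h1
      have h2 : D * Stmt8Aux.cross w zs = D * (A * μ ^ n) := by
        rw [h1]; ring
      exact mul_left_cancel₀ hD h2
    set q : ℝ := μ ^ n with hq
    set q' : ℝ := μ⁻¹ ^ n with hq'
    have hq0 : 0 < q := by rw [hq]; exact pow_pos hμ0 n
    have hq'0 : 0 < q' := by rw [hq']; exact pow_pos (inv_pos.mpr hμ0) n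
    have hqq' : q * q' = 1 := by
      rw [hq, hq', ← mul_pow, hμinv, one_pow]
    have hexpq : Real.exp ((n : ℝ) * α) ≤ q * q := by
      have h1 : Real.exp ((n : ℝ) * (α / 2)) = g ^ n := by
        rw [hgdef, ← Real.exp_nat_mul]
      have h2 : g ^ n ≤ q := by
        rw [hq]; exact pow_le_pow_left₀ (le_of_lt hg0) hμg n
      have h3 : Real.exp ((n : ℝ) * α)
          = Real.exp ((n : ℝ) * (α / 2)) * Real.exp ((n : ℝ) * (α / 2)) := by
        rw [← Real.exp_add]; ring_nf
      have hgn : 0 < g ^ n := pow_pos hg0 n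
      rw [h3, h1]
      exact Stmt8Aux.mul_self_mono hgn h2
    clear_value q q'
    set aw : ℝ := ‖w‖ with haw
    have aw_pos : 0 < aw := by rw [haw]; exact norm_pos_iff.mpr hw0
    have haw_low : q * |A| ≤ aw * ‖zs‖ := by
      have h1 := Stmt8Aux.abs_cross_le w zs
      rw [hcws, ← haw] at h1
      calc q * |A| = |A * q| := by
            rw [abs_mul, abs_of_pos hq0]; ring
        _ ≤ aw * ‖zs‖ := h1
    obtain ⟨lw, hlw, hvw⟩ := Stmt8Aux.exists_real_mul w hw0
    have hlw_abs : |lw| * aw = 1 := by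
      rw [haw]; exact Stmt8Aux.abs_of_vecC_eq hvw
    clear_value aw
    rw [hit, Metric.mem_ball]
    set d : ℝ := dist (Stmt8Aux.projC w) u with hd
    have hd0 : 0 ≤ d := by rw [hd]; exact dist_nonneg
    have hF1 : 2 * d * (aw * ‖zu‖) ≤ q' * |B| := by
      have h2d := Stmt8Aux.two_mul_dist_le (Stmt8Aux.projC w) u
      rw [hvw, hvu, Stmt8Aux.cross_real_mul_left, Stmt8Aux.cross_real_mul_right,
        hcwu, ← hd] at h2d
      have habs : |lw * (lu * -(B * q'))| = |lw| * |lu| * (|B| * q') := by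
        rw [abs_mul, abs_mul, abs_neg, abs_mul, abs_of_pos hq'0]
        ring
      rw [habs] at h2d
      have e1 : 2 * d * (aw * ‖zu‖)
          ≤ |lw| * |lu| * (|B| * q') * (aw * ‖zu‖) :=
        mul_le_mul_of_nonneg_right h2d (by positivity)
      have e2 : |lw| * |lu| * (|B| * q') * (aw * ‖zu‖)
          = (|lw| * aw) * ((|lu| * ‖zu‖) * (|B| * q')) := by ring
      rw [hlw_abs, hlu_abs, one_mul, one_mul] at e2
      linarith [e1, e2]
    clear_value d
    have hs1 : 2 * d * aw ≤ q' := by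
      have e1 : q' * |B| ≤ q' * ‖zu‖ := mul_le_mul_of_nonneg_left habsB hq'0.le
      have e2 : (2 * d * aw) * ‖zu‖ ≤ q' * ‖zu‖ := by linarith [hF1, e1]
      exact le_of_mul_le_mul_right e2 au_pos
    have hs2 : 2 * δ * q ≤ aw := by
      have e1 : q * (2 * δ * ‖zs‖) ≤ q * |A| := mul_le_mul_of_nonneg_left habsA hq0.le
      have e2 : (2 * δ * q) * ‖zs‖ ≤ aw * ‖zs‖ := by linarith [haw_low, e1]
      exact le_of_mul_le_mul_right e2 as_pos
    have hs3 : 4 * δ * d * (q * q) ≤ 1 := by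
      have e0 : 0 ≤ d * (aw - 2 * δ * q) := mul_nonneg hd0 (by linarith [hs2])
      have e1 : 4 * δ * d * q ≤ q' := Stmt8Aux.step3aux hs1 e0
      have e2 : (4 * δ * d * q) * q ≤ q' * q := mul_le_mul_of_nonneg_right e1 hq0.le
      have e3 : q' * q = 1 := by linarith [hqq']
      linarith [e2, e3]
    have hs4 : 4 * δ * d * Real.exp ((n : ℝ) * α) ≤ 1 := by
      have e0 : 0 ≤ 4 * δ * d := by positivity
      have e1 := mul_le_mul_of_nonneg_left hexpq e0
      linarith [hs3, e1]
    have hE0 : 0 < Real.exp (-(n : ℝ) * α) := Real.exp_pos _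
    have hE1 : Real.exp (-(n : ℝ) * α) * Real.exp ((n : ℝ) * α) = 1 := by
      rw [← Real.exp_add]; ring_nf; exact Real.exp_zero
    have hEq0 : 0 < Real.exp ((n : ℝ) * α) := Real.exp_pos _
    have e1 : (4 * δ * d) * Real.exp ((n : ℝ) * α)
        ≤ Real.exp (-(n : ℝ) * α) * Real.exp ((n : ℝ) * α) := by
      linarith [hs4, hE1]
    have e2 : 4 * δ * d ≤ Real.exp (-(n : ℝ) * α) := le_of_mul_le_mul_right e1 hEq0
    have e3 : δ * d < Real.exp (-(n : ℝ) * α) := by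
      have := mul_nonneg hδ.le hd0
      linarith [e2, hE0]
    have e4 := mul_lt_mul_of_pos_left e3 (inv_pos.mpr hδ)
    have e5 : δ⁻¹ * (δ * d) = d := by
      rw [← mul_assoc, inv_mul_cancel₀ (ne_of_gt hδ), one_mul]
    show d < 1 * δ⁻¹ * Real.exp (-(n : ℝ) * α)
    rw [one_mul]
    linarith [e4, e5]
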